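/- For probability vectors y and z over a finite set (y_i, z_i ≥ 0, ∑_i y_i = 1, ∑_i z_i = 1, with z_i > 0 whenever y_i > 0), the sum of squared differences is bounded by the KL divergence: ∑_i (y_i − z_i)² ≤ ∑_i y_i · ln(y_i / z_i). -/

import Mathlib

open Real Finset

lemma log_ge_one_sub_inv {x : ℝ} (hx : 0 < x) : 1 - 1/x ≤ Real.log x := by
  have h := Real.log_le_sub_one_of_pos (show (0:ℝ) < 1/x by positivity)
  rw [Real.log_div one_ne_zero (ne_of_gt hx), Real.log_one] at h
  have hx' : x ≠ 0 := ne_of_gt hx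
  nlinarith [h]

lemma pade {t : ℝ} (ht : 1 ≤ t) : 2*(t-1) ≤ (t+1) * Real.log t := by
  set g : ℝ → ℝ := fun x => (x+1) * Real.log x - 2*(x-1) with hg
  have hd : ∀ x ∈ Set.Ioi (1:ℝ), HasDerivAt g (Real.log x + (x+1) * x⁻¹ - 2) x := by
    intro x hx
    have hx0 : 0 < x := lt_trans one_pos hx
    have h1 : HasDerivAt (fun x : ℝ => (x+1) * Real.log x)
        (1 * Real.log x + (x+1) * x⁻¹) x := by
      exact ((hasDerivAt_id x).add_const 1).mul (Real.hasDerivAt_log (ne_of_gt hx0))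
    have h2 : HasDerivAt (fun x : ℝ => 2*(x-1)) 2 x := by
      simpa using ((hasDerivAt_id x).sub_const 1).const_mul 2
    exact (h1.sub h2).congr_deriv (by ring)
  have hmono : MonotoneOn g (Set.Ici (1:ℝ)) := by
    apply monotoneOn_of_deriv_nonneg (convex_Ici 1)
    · apply ContinuousOn.sub
      · exact (continuousOn_id.add continuousOn_const).mul
          (Real.continuousOn_log.mono (by intro x hx; simp at hx ⊢; linarith))
      · fun_prop
    · rw [interior_Ici]
      intro x hx
      exact (hd x hx).differentiableAt.differentiableWithinAt
    · rw [interior_Ici]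
      intro x hx
      rw [(hd x hx).deriv]
      have hx0 : 0 < x := lt_trans one_pos hx
      have := log_ge_one_sub_inv hx0
      have hx' : x ≠ 0 := ne_of_gt hx0
      have hinv : (x+1) * x⁻¹ = 1 + 1/x := by field_simp
      linarith
  have h1 : g 1 ≤ g t := hmono (by simp) ht ht
  simp [hg, Real.log_one] at h1
  linarith

lemma pade_neg {t : ℝ} (ht0 : 0 < t) (ht : t ≤ 1) : (t+1) * Real.log t ≤ 2*(t-1) := by
  have h := pade (t := 1/t) (by rw [le_div_iff₀ ht0]; linarith)
  rw [Real.log_div one_ne_zero (ne_of_gt ht0), Real.log_one] at h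
  have ht' : t ≠ 0 := ne_of_gt ht0
  have h2 : (2*(1/t-1)) * t ≤ ((1/t+1) * (0 - Real.log t)) * t :=
    mul_le_mul_of_nonneg_right h (le_of_lt ht0)
  have e1 : (2*(1/t-1)) * t = 2*(1-t) := by field_simp
  have e2 : ((1/t+1) * (0 - Real.log t)) * t = -((1+t) * Real.log t) := by
    field_simp
    ring
  rw [e1, e2] at h2
  linarith

lemma keyA {t : ℝ} (ht : 0 ≤ t) : 3*(t-1)^2 ≤ 2*(t+2)*(t*Real.log t - t + 1) := by
  set h : ℝ → ℝ := fun x => 2*(x+2)*(x*Real.log x - x + 1) - 3*(x-1)^2 with hh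
  have key : ∀ x, x ≠ 0 →
      HasDerivAt h (2*((x*Real.log x - x + 1) + (x+2)*Real.log x) - 3*(2*(x-1))) x := by
    intro x hx
    have h1 : HasDerivAt (fun x : ℝ => x*Real.log x - x + 1) (Real.log x + 1 - 1) x :=
      ((Real.hasDerivAt_mul_log hx).sub (hasDerivAt_id x)).add_const 1
    have h2 : HasDerivAt (fun x : ℝ => 2*(x+2)) 2 x := by
      simpa using ((hasDerivAt_id x).add_const 2).const_mul 2
    have h3 : HasDerivAt (fun x : ℝ => 2*(x+2)*(x*Real.log x - x + 1))
        (2*(x*Real.log x - x + 1) + 2*(x+2)*(Real.log x + 1 - 1)) x := h2.mul h1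
    have h4 : HasDerivAt (fun x : ℝ => 3*(x-1)^2) (3*(2*(x-1))) x := by
      simpa using (((hasDerivAt_id x).sub_const 1).pow 2).const_mul 3
    have := h3.sub h4
    exact this.congr_deriv (by ring)
  have hcont : Continuous h := by
    apply Continuous.sub
    · exact (continuous_const.mul (continuous_id.add continuous_const)).mul
        ((Real.continuous_mul_log.sub continuous_id).add continuous_const)
    · fun_prop
  have h1val : h 1 = 0 := by simp [hh]
  rcases le_or_gt t 1 with hcase | hcase
  · -- antitone on Icc 0 1
    have hanti : AntitoneOn h (Set.Icc (0:ℝ) 1) := by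
      apply antitoneOn_of_deriv_nonpos (convex_Icc 0 1) hcont.continuousOn
      · rw [interior_Icc]
        intro x hx
        exact (key x (ne_of_gt hx.1)).differentiableAt.differentiableWithinAt
      · rw [interior_Icc]
        intro x hx
        rw [(key x (ne_of_gt hx.1)).deriv]
        have hp := pade_neg hx.1 (le_of_lt hx.2)
        nlinarith [hp]
    have := hanti (Set.mem_Icc.2 ⟨ht, hcase⟩) (Set.mem_Icc.2 ⟨zero_le_one, le_refl 1⟩) hcase
    rw [h1val] at this
    simp only [hh] at this
    linarith
  · -- monotone on Ici 1
    have hmono : MonotoneOn h (Set.Ici (1:ℝ)) := by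
      apply monotoneOn_of_deriv_nonneg (convex_Ici 1) hcont.continuousOn
      · rw [interior_Ici]
        intro x hx
        exact (key x (ne_of_gt (lt_trans one_pos hx))).differentiableAt.differentiableWithinAt
      · rw [interior_Ici]
        intro x hx
        rw [(key x (show x ≠ 0 by exact ne_of_gt (lt_trans one_pos hx))).deriv]
        have hp := pade (le_of_lt hx)
        nlinarith [hp]
    have := hmono (Set.mem_Ici.2 (le_refl 1)) (Set.mem_Ici.2 hcase.le) hcase.le
    rw [h1val] at this
    simp only [hh] at this
    linarith

lemma sum_sq_le_sq_sum {m : ℕ} (s : Finset (Fin m)) (f : Fin m → ℝ)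
    (hf : ∀ i ∈ s, 0 ≤ f i) : ∑ i ∈ s, f i ^ 2 ≤ (∑ i ∈ s, f i) ^ 2 := by
  have : ∀ i ∈ s, f i ^ 2 ≤ f i * ∑ j ∈ s, f j := by
    intro i hi
    rw [pow_two]
    exact mul_le_mul_of_nonneg_left (Finset.single_le_sum hf hi) (hf i hi)
  calc ∑ i ∈ s, f i ^ 2 ≤ ∑ i ∈ s, f i * ∑ j ∈ s, f j := Finset.sum_le_sum this
    _ = (∑ i ∈ s, f i) ^ 2 := by rw [← Finset.sum_mul, pow_two]

theorem stmt_0 (n : ℕ) (y z : Fin n → ℝ)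
    (hy0 : ∀ i, 0 ≤ y i) (hz0 : ∀ i, 0 ≤ z i)
    (hy1 : ∑ i, y i = 1) (hz1 : ∑ i, z i = 1)
    (hac : ∀ i, 0 < y i → 0 < z i) :
    ∑ i, (y i - z i) ^ 2 ≤ ∑ i, y i * Real.log (y i / z i) := by
  classical
  set d : Fin n → ℝ := fun i => y i - z i with hd
  set s : Fin n → ℝ := fun i => y i + 2 * z i with hs
  set A : Finset (Fin n) := Finset.univ.filter fun i => z i < y i with hA
  set a : ℝ := ∑ i ∈ A, d i with ha
  -- total difference is zero
  have hsum0 : ∑ i, d i = 0 := by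
    simp only [hd, Finset.sum_sub_distrib, hy1, hz1, sub_self]
  have hsplit : ∑ i ∈ A, d i + ∑ i ∈ Aᶜ, d i = 0 := by
    rw [Finset.sum_add_sum_compl]; exact hsum0
  have hAc : ∑ i ∈ Aᶜ, (z i - y i) = a := by
    have : ∑ i ∈ Aᶜ, (z i - y i) = -∑ i ∈ Aᶜ, d i := by
      rw [← Finset.sum_neg_distrib]; apply Finset.sum_congr rfl; intro i _; simp [hd]
    rw [this]; linarith
  have hdA : ∀ i ∈ A, 0 ≤ d i := by
    intro i hi; simp only [hA, Finset.mem_filter] at hi; simp [hd]; linarith [hi.2]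
  have hdAc : ∀ i ∈ Aᶜ, 0 ≤ z i - y i := by
    intro i hi
    simp only [hA, Finset.mem_compl, Finset.mem_filter, Finset.mem_univ, true_and,
      not_lt] at hi
    linarith
  -- ∑ |d| = 2a
  have habs : ∑ i, |d i| = 2 * a := by
    rw [← Finset.sum_add_sum_compl A]
    have h1 : ∑ i ∈ A, |d i| = a := by
      rw [ha]; apply Finset.sum_congr rfl; intro i hi; exact abs_of_nonneg (hdA i hi)
    have h2 : ∑ i ∈ Aᶜ, |d i| = a := by
      rw [← hAc]; apply Finset.sum_congr rfl; intro i hi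
      rw [abs_sub_comm]; exact abs_of_nonneg (hdAc i hi)
    rw [h1, h2]; ring
  -- step 1 : ∑ d² ≤ 2a²
  have step1 : ∑ i, d i ^ 2 ≤ 2 * a ^ 2 := by
    rw [← Finset.sum_add_sum_compl A]
    have h1 : ∑ i ∈ A, d i ^ 2 ≤ a ^ 2 := sum_sq_le_sq_sum A d hdA
    have h2 : ∑ i ∈ Aᶜ, d i ^ 2 ≤ a ^ 2 := by
      have e : ∑ i ∈ Aᶜ, d i ^ 2 = ∑ i ∈ Aᶜ, (z i - y i) ^ 2 := by
        apply Finset.sum_congr rfl; intro i _; simp [hd]; ring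
      rw [e, ← hAc]
      exact sum_sq_le_sq_sum Aᶜ _ hdAc
    linarith
  -- step 2 : Cauchy–Schwarz
  have hs0 : ∀ i, 0 ≤ s i := fun i => by simp [hs]; nlinarith [hy0 i, hz0 i]
  have step2 : (∑ i, |d i|) ^ 2 ≤ 3 * ∑ i, d i ^ 2 / s i := by
    have cs := Finset.sum_mul_sq_le_sq_mul_sq Finset.univ
      (fun i => Real.sqrt (s i)) (fun i => |d i| / Real.sqrt (s i))
    have e1 : ∀ i : Fin n, Real.sqrt (s i) * (|d i| / Real.sqrt (s i)) = |d i| := by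
      intro i
      rcases eq_or_lt_of_le (hs0 i) with h0 | h0
      · have hz' : z i = 0 := by simp [hs] at h0; nlinarith [hy0 i, hz0 i]
        have hy' : y i = 0 := by simp [hs] at h0; nlinarith [hy0 i, hz0 i]
        simp [hd, hy', hz']
      · field_simp [Real.sqrt_ne_zero'.2 h0]
    have e2 : ∀ i : Fin n, Real.sqrt (s i) ^ 2 = s i := fun i => Real.sq_sqrt (hs0 i)
    have e3 : ∀ i : Fin n, (|d i| / Real.sqrt (s i)) ^ 2 = d i ^ 2 / s i := by
      intro i
      rw [div_pow, sq_abs, e2]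
    have e4 : ∑ i : Fin n, s i = 3 := by
      simp only [hs, Finset.sum_add_distrib, hy1, ← Finset.mul_sum, hz1]; norm_num
    simp only [e1, e3] at cs
    calc (∑ i, |d i|) ^ 2 ≤ (∑ i, Real.sqrt (s i) ^ 2) * ∑ i, d i ^ 2 / s i := cs
      _ = 3 * ∑ i, d i ^ 2 / s i := by
          congr 1
          simp only [e2]; exact e4
  -- step 3 : termwise KL bound
  have step3 : ∀ i : Fin n, (3/2) * (d i ^ 2 / s i) ≤
      y i * Real.log (y i / z i) - y i + z i := by
    intro i
    rcases eq_or_lt_of_le (hz0 i) with hz' | hz'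
    · have hy' : y i = 0 := by
        by_contra h
        have : 0 < y i := lt_of_le_of_ne (hy0 i) (Ne.symm h)
        exact absurd (hac i this) (by rw [← hz']; exact lt_irrefl 0)
      simp [hd, hs, hy', ← hz']
    · set t : ℝ := y i / z i with htdef
      have ht : 0 ≤ t := div_nonneg (hy0 i) (le_of_lt hz')
      have hyi : y i = z i * t := by rw [htdef]; field_simp
      have hkey := keyA ht
      have hz2 : (0:ℝ) ≤ z i ^ 2 := sq_nonneg _
      have hmul := mul_le_mul_of_nonneg_left hkey hz2
      have hsi : s i = z i * (t + 2) := by simp only [hs]; rw [hyi]; ring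
      have hsipos : 0 < s i := by rw [hsi]; positivity
      have hdi : d i = z i * (t - 1) := by simp only [hd]; rw [hyi]; ring
      have e : (3:ℝ)/2 * (d i ^ 2 / s i) = (3/2 * d i ^ 2) / s i := by ring
      rw [e, div_le_iff₀ hsipos, hdi, hsi, hyi]
      nlinarith [hmul]
  have step3sum : (3/2) * (∑ i, d i ^ 2 / s i) ≤ ∑ i, y i * Real.log (y i / z i) := by
    have h1 : ∑ i, ((3:ℝ)/2) * (d i ^ 2 / s i) ≤
        ∑ i, (y i * Real.log (y i / z i) - y i + z i) :=
      Finset.sum_le_sum fun i _ => step3 i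
    have h2 : ∑ i, (y i * Real.log (y i / z i) - y i + z i)
        = ∑ i, y i * Real.log (y i / z i) := by
      rw [Finset.sum_add_distrib, Finset.sum_sub_distrib, hy1, hz1]; ring
    rw [← Finset.mul_sum] at h1
    linarith [h1, h2.le, h2.ge]
  -- combine
  have hTV : (2*a)^2 ≤ 3 * ∑ i, d i ^ 2 / s i := by rw [← habs]; exact step2
  have : ∑ i, d i ^ 2 ≤ ∑ i, y i * Real.log (y i / z i) := by nlinarith [step1, hTV, step3sum]
  simpa [hd] using this
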